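/- Let B_X be the unit ball of a complex Banach space X, F : B_X → closure(D^n) holomorphic with F(z) = a + Σ_{s≥1} P_s(z) and |a_j| = ‖a‖_∞ for all j. Then for ‖z‖ = r ≤ R, where R ∈ (0,1) is the root of 3(1-r)log(1/(1-r)) = 2r: Σ_{n≥0} ‖a‖_∞ r^n/(n+1) + Σ_{n≥1} (1/(n+1)) Σ_{k=1}^n r^{k-1} ‖P_{n-k+1}(z)‖_∞ ≤ (1/r) log(1/(1-r)). -/

import Mathlib

open Metric Finset


lemma normSq_le_one (b : ℂ) (hb : ‖b‖ ≤ 1) : b.re ^ 2 + b.im ^ 2 ≤ 1 := by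
  have : Complex.normSq b ≤ 1 := by
    rw [← Complex.sq_norm]
    have : ‖b‖ ≤ 1 := hb
    nlinarith [norm_nonneg b]
  simpa [Complex.normSq_apply, sq] using this

lemma mobius_le (b g : ℂ) (hb : ‖b‖ ≤ 1) (hg : ‖g‖ ≤ 1) :
    ‖g - b‖ ≤ ‖1 - (starRingEnd ℂ) b * g‖ := by
  have h1 : Complex.normSq (g - b) ≤ Complex.normSq (1 - (starRingEnd ℂ) b * g) := by
    have hb2 := normSq_le_one b hb
    have hg2 := normSq_le_one g hg
    simp only [Complex.normSq_apply, Complex.sub_re, Complex.sub_im, Complex.mul_re,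
      Complex.mul_im, Complex.one_re, Complex.one_im, Complex.conj_re, Complex.conj_im]
    nlinarith [mul_nonneg (sub_nonneg.2 hb2) (sub_nonneg.2 hg2)]
  have h2 := Real.sqrt_le_sqrt h1
  simpa [Complex.norm_def] using h2

lemma hasSum_zero_pow (β : ℕ → ℂ) : HasSum (fun j => β j * (0:ℂ) ^ j) (β 0) := by
  have h : (fun j => β j * (0:ℂ) ^ j) = fun j => if j = 0 then β 0 else 0 := by
    funext j; cases j <;> simp
  rw [h]; exact hasSum_ite_eq 0 (β 0)

lemma coeff_one_bound (β : ℕ → ℂ) (τ : ℝ) (hτ : 0 < τ) (G : ℂ → ℂ)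
    (hsum : ∀ w : ℂ, ‖w‖ < τ → HasSum (fun j => β j * w ^ j) (G w))
    (hbd : ∀ w : ℂ, ‖w‖ < τ → ‖G w‖ ≤ 1) :
    ‖β 1‖ * τ ≤ 1 - ‖β 0‖ ^ 2 := by
  have hG0 : G 0 = β 0 := ((hsum 0 (by simpa using hτ)).unique (hasSum_zero_pow β))
  have hβ0 : ‖β 0‖ ≤ 1 := hG0 ▸ hbd 0 (by simpa using hτ)
  -- the power series
  set p : FormalMultilinearSeries ℂ ℂ ℂ := FormalMultilinearSeries.ofScalars ℂ β with hp
  have hGp : ∀ w : ℂ, ‖w‖ < τ → G w = p.sum w := by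
    intro w hw
    have h1 : HasSum (fun j => β j * w ^ j) (G w) := hsum w hw
    have h2 : p.sum w = ∑' j : ℕ, β j * w ^ j := by
      rw [FormalMultilinearSeries.sum]
      congr 1; funext j
      rw [hp, FormalMultilinearSeries.ofScalars_apply_eq, smul_eq_mul]
    rw [h2, h1.tsum_eq]
  -- radius bound
  have hrad : ∀ t : ℝ, 0 < t → t < τ → ENNReal.ofReal t < p.radius := by
    intro t ht htτ
    obtain ⟨t', ht'1, ht'2⟩ := exists_between htτ
    have ht'0 : 0 < t' := ht.trans ht'1
    have hs : Summable (fun j => β j * (t' : ℂ) ^ j) := by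
      refine (hsum (t' : ℂ) ?_).summable
      simpa [abs_of_pos ht'0] using ht'2
    obtain ⟨C, hC⟩ := (hs.tendsto_atTop_zero.norm.bddAbove_range).imp
      (fun C hC => fun j => hC (Set.mem_range_self j))
    have hle : (t'.toNNReal : ENNReal) ≤ p.radius := by
      refine p.le_radius_of_bound C (fun j => ?_)
      have : ‖p j‖ = ‖β j‖ := FormalMultilinearSeries.ofScalars_norm (E := ℂ) β j
      rw [this]
      calc ‖β j‖ * (t'.toNNReal : ℝ) ^ j = ‖β j * (t':ℂ) ^ j‖ := by
            simp [norm_mul, Real.coe_toNNReal _ ht'0.le, abs_of_pos ht'0]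
      _ ≤ C := hC j
    calc ENNReal.ofReal t < ENNReal.ofReal t' := by
          exact (ENNReal.ofReal_lt_ofReal_iff ht'0).2 ht'1
    _ = (t'.toNNReal : ENNReal) := by simp [ENNReal.ofReal]
    _ ≤ p.radius := hle
  have hkey : ∀ t : ℝ, 0 < t → t < τ → ‖β 1‖ * t ≤ 1 - ‖β 0‖ ^ 2 := by
    intro t ht htτ
    have hrt := hrad t ht htτ
    have hball := p.hasFPowerSeriesOnBall (lt_of_le_of_lt zero_le hrt)
    have hdiffsum : DifferentiableOn ℂ p.sum (Metric.eball 0 p.radius) :=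
      hball.differentiableOn
    have hsub : ball (0:ℂ) t ⊆ Metric.eball (0:ℂ) p.radius := by
      intro w hw
      rw [mem_ball_zero_iff] at hw
      rw [Metric.mem_eball, edist_zero_right]
      calc (‖w‖₊ : ENNReal) = ENNReal.ofReal ‖w‖ := (ofReal_norm w).symm
      _ < ENNReal.ofReal t := (ENNReal.ofReal_lt_ofReal_iff ht).2 hw
      _ < p.radius := hrt
    have hGdiff : DifferentiableOn ℂ G (ball (0:ℂ) t) := by
      refine (hdiffsum.mono hsub).congr (fun w hw => ?_)
      exact hGp w ((mem_ball_zero_iff.1 hw).trans htτ)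
    have hderiv : deriv G 0 = β 1 := by
      have heq : G =ᶠ[nhds (0:ℂ)] p.sum := by
        filter_upwards [Metric.ball_mem_nhds (0:ℂ) (ht.trans htτ)] with w hw
        exact hGp w (mem_ball_zero_iff.1 hw)
      rw [heq.deriv_eq, hball.hasFPowerSeriesAt.deriv, hp,
        FormalMultilinearSeries.ofScalars_apply_eq, smul_eq_mul, one_pow, mul_one]
    have hGd : HasDerivAt G (β 1) 0 := by
      have h := (hGdiff.differentiableAt (isOpen_ball.mem_nhds (mem_ball_self ht))).hasDerivAt
      rwa [hderiv] at h
    by_cases hb1 : 1 ≤ ‖β 0‖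
    · -- case ‖β 0‖ = 1 : maximum modulus
      have hb1' : ‖β 0‖ = 1 := le_antisymm hβ0 hb1
      have hd : ∀ᶠ w in nhds (0:ℂ), DifferentiableAt ℂ G w := by
        filter_upwards [isOpen_ball.mem_nhds (mem_ball_self ht)] with w hw
        exact hGdiff.differentiableAt (isOpen_ball.mem_nhds hw)
      have hmax : IsLocalMax (norm ∘ G) 0 := by
        filter_upwards [Metric.ball_mem_nhds (0:ℂ) (ht.trans htτ)] with w hw
        have : ‖G w‖ ≤ 1 := hbd w (mem_ball_zero_iff.1 hw)
        simpa [Function.comp, hG0, hb1'] using this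
      have hev := Complex.eventually_eq_of_isLocalMax_norm hd hmax
      have hd0 : deriv G 0 = 0 := by
        have h2 : deriv G 0 = deriv (fun _ : ℂ => G 0) 0 := Filter.EventuallyEq.deriv_eq hev
        simpa using h2
      rw [← hderiv, hd0, hb1']
      simp
    · push_neg at hb1
      set b := β 0 with hbdef
      have hden : ∀ g : ℂ, ‖g‖ ≤ 1 → (1 : ℂ) - (starRingEnd ℂ) b * g ≠ 0 := by
        intro g hg h0
        rw [sub_eq_zero] at h0
        have h1 : ‖(starRingEnd ℂ) b * g‖ < 1 := by
          rw [norm_mul, RCLike.norm_conj]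
          calc ‖b‖ * ‖g‖ ≤ ‖b‖ * 1 := by
                exact mul_le_mul_of_nonneg_left hg (norm_nonneg b)
          _ < 1 := by rw [mul_one]; exact hb1
        rw [← h0] at h1; simp at h1
      set H : ℂ → ℂ := fun w => (G w - b) * ((1 : ℂ) - (starRingEnd ℂ) b * G w)⁻¹ with hHdef
      have hwball : ∀ w : ℂ, w ∈ ball (0:ℂ) t → ‖G w‖ ≤ 1 := fun w hw =>
        hbd w ((mem_ball_zero_iff.1 hw).trans htτ)
      have hHdiff : DifferentiableOn ℂ H (ball (0:ℂ) t) := by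
        apply DifferentiableOn.mul (hGdiff.sub_const b)
        apply DifferentiableOn.inv
        · exact (differentiableOn_const _).sub ((differentiableOn_const _).mul hGdiff)
        · intro w hw; exact hden _ (hwball w hw)
      have hH0 : H 0 = 0 := by simp [hHdef, hG0]
      have hHle : ∀ w : ℂ, w ∈ ball (0:ℂ) t → ‖H w‖ ≤ 1 := by
        intro w hw
        have hGw := hwball w hw
        have hml := mobius_le b (G w) hβ0 hGw
        have hpos : 0 < ‖(1 : ℂ) - (starRingEnd ℂ) b * G w‖ :=
          norm_pos_iff.2 (hden _ hGw)
        rw [hHdef, norm_mul, norm_inv, ← div_eq_mul_inv, div_le_one hpos]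
        exact hml
      have hv0 : (1:ℂ) - (starRingEnd ℂ) b * G 0 ≠ 0 := hden _ (hG0 ▸ hβ0)
      have hu : HasDerivAt (fun w => G w - b) (β 1) 0 := hGd.sub_const b
      have hv : HasDerivAt (fun w => (1:ℂ) - (starRingEnd ℂ) b * G w)
          (-((starRingEnd ℂ) b * β 1)) 0 := (hGd.const_mul ((starRingEnd ℂ) b)).const_sub 1
      have hinv := hv.inv hv0
      have hH : HasDerivAt H (β 1 * ((1:ℂ) - (starRingEnd ℂ) b * G 0)⁻¹) 0 := by
        have h := hu.mul hinv
        have h2 : G 0 - b = 0 := by rw [hG0]; ring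
        simp only [h2, zero_mul, add_zero] at h
        exact h
      have hnormd : ‖deriv H 0‖ = ‖β 1‖ / (1 - ‖b‖ ^ 2) := by
        rw [hH.deriv, norm_mul, norm_inv]
        congr 1
        rw [hG0]
        have hcm : (starRingEnd ℂ) b * b = ((‖b‖ ^ 2 : ℝ) : ℂ) := by
          rw [mul_comm, Complex.mul_conj, Complex.normSq_eq_norm_sq]
        rw [hcm]
        rw [show (1:ℂ) - ((‖b‖^2 : ℝ):ℂ) = (((1 - ‖b‖^2 : ℝ)):ℂ) by push_cast; ring]
        rw [Complex.norm_real, Real.norm_eq_abs,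
          abs_of_nonneg (by nlinarith [hb1, norm_nonneg b] : (0:ℝ) ≤ 1 - ‖b‖^2)]
      have hfrac : ∀ ε : ℝ, 0 < ε → ‖deriv H 0‖ ≤ (1 + ε) / t := by
        intro ε hε
        apply Complex.norm_deriv_le_div_of_mapsTo_ball hHdiff ?_ ht
        intro w hw
        rw [mem_closedBall, hH0, dist_zero_right]
        exact le_trans (hHle w hw) (by linarith)
      have hfin : ‖deriv H 0‖ ≤ 1 / t := by
        apply le_of_forall_pos_le_add
        intro ε hε
        calc ‖deriv H 0‖ ≤ (1 + ε * t) / t := hfrac (ε * t) (mul_pos hε ht)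
        _ = 1 / t + ε := by field_simp
      rw [hnormd] at hfin
      have hbpos : 0 < 1 - ‖b‖ ^ 2 := by nlinarith [norm_nonneg b]
      rw [div_le_div_iff₀ hbpos ht] at hfin
      linarith
  by_contra hcon
  push_neg at hcon
  have h0 : (0:ℝ) ≤ 1 - ‖β 0‖ ^ 2 := by nlinarith [norm_nonneg (β 0)]
  have hβ1pos : 0 < ‖β 1‖ := by
    rcases (norm_nonneg (β 1)).lt_or_eq with h | h
    · exact h
    · exfalso; rw [← h, zero_mul] at hcon; nlinarith [norm_nonneg (β 0)]
  set t := ((1 - ‖β 0‖ ^ 2) / ‖β 1‖ + τ) / 2 with htdef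
  have ht1 : (1 - ‖β 0‖ ^ 2) / ‖β 1‖ < τ := by
    rw [div_lt_iff₀ hβ1pos]; linarith [hcon]
  have htpos : 0 < t := by
    have : (0:ℝ) ≤ (1 - ‖β 0‖ ^ 2) / ‖β 1‖ := div_nonneg h0 hβ1pos.le
    rw [htdef]; linarith
  have htτ : t < τ := by rw [htdef]; linarith
  have := hkey t htpos htτ
  rw [htdef] at this
  have h2 : ‖β 1‖ * ((1 - ‖β 0‖ ^ 2) / ‖β 1‖) = 1 - ‖β 0‖ ^ 2 := by
    field_simp
  nlinarith [this, h2]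


lemma omega_sum (s : ℕ) (hs : 1 ≤ s) (m : ℕ) :
    (∑ k ∈ range s, (Complex.exp (2 * Real.pi * Complex.I / s) ^ m) ^ k)
      = if s ∣ m then (s : ℂ) else 0 := by
  have hs0 : (s : ℂ) ≠ 0 := Nat.cast_ne_zero.2 (by omega)
  have hωm : Complex.exp (2 * Real.pi * Complex.I / s) ^ m
      = Complex.exp (m * (2 * Real.pi * Complex.I / s)) := by
    rw [← Complex.exp_nat_mul]
  have hpow_s : (Complex.exp (2 * Real.pi * Complex.I / s) ^ m) ^ s = 1 := by
    rw [hωm, ← Complex.exp_nat_mul]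
    have h1 : (s : ℂ) * ((m : ℂ) * (2 * Real.pi * Complex.I / s))
        = (m : ℤ) * (2 * Real.pi * Complex.I) := by
      push_cast; field_simp
    rw [h1, Complex.exp_int_mul_two_pi_mul_I]
  by_cases hdvd : s ∣ m
  · obtain ⟨c, hc⟩ := hdvd
    have hone : Complex.exp (2 * Real.pi * Complex.I / s) ^ m = 1 := by
      rw [hωm]
      have h1 : (m : ℂ) * (2 * Real.pi * Complex.I / s)
          = (c : ℤ) * (2 * Real.pi * Complex.I) := by
        rw [hc]; push_cast; field_simp
      rw [h1, Complex.exp_int_mul_two_pi_mul_I]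
    rw [if_pos ⟨c, hc⟩, hone]
    simp
  · rw [if_neg hdvd]
    have hx1 : Complex.exp (2 * Real.pi * Complex.I / s) ^ m ≠ 1 := by
      rw [hωm]
      intro h
      rw [Complex.exp_eq_one_iff] at h
      obtain ⟨k, hk⟩ := h
      have hpi : (2 * (Real.pi : ℂ) * Complex.I) ≠ 0 := by
        simp [Real.pi_ne_zero, Complex.I_ne_zero]
      have h2 : (m : ℂ) = k * s := by
        field_simp at hk
        have h5 : ((m : ℂ)) * (2 * Real.pi * Complex.I) = ((k : ℂ) * s) * (2 * Real.pi * Complex.I) := by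
          rw [hk]; ring
        exact mul_right_cancel₀ hpi h5
      have h3 : (m : ℤ) = k * s := by exact_mod_cast h2
      exact hdvd (Int.natCast_dvd_natCast.mp ⟨k, by rw [h3, mul_comm]⟩)
    rw [geom_sum_eq hx1, hpow_s]
    simp


lemma coeff_bound (b : ℕ → ℂ) (ρ : ℝ) (hρ : 0 < ρ) (g : ℂ → ℂ)
    (hsum : ∀ c : ℂ, ‖c‖ < ρ → HasSum (fun m => b m * c ^ m) (g c))
    (hbd : ∀ c : ℂ, ‖c‖ < ρ → ‖g c‖ ≤ 1) (s : ℕ) (hs : 1 ≤ s) :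
    ‖b s‖ * ρ ^ s ≤ 1 - ‖b 0‖ ^ 2 := by
  set ω : ℂ := Complex.exp (2 * Real.pi * Complex.I / s) with hω
  have hωabs : ∀ k : ℕ, ‖ω ^ k‖ = 1 := by
    intro k
    rw [norm_pow]
    have h1 : ω = Complex.exp (((2 * Real.pi / s : ℝ) : ℂ) * Complex.I) := by
      rw [hω]; congr 1; push_cast; ring
    have h2 : ‖ω‖ = 1 := by
      rw [h1]
      exact Complex.norm_exp_ofReal_mul_I _
    rw [h2, one_pow]
  have main : ∀ w : ℂ, ‖w‖ < ρ ^ s →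
      ∃ V : ℂ, HasSum (fun j => b (j * s) * w ^ j) V ∧ ‖V‖ ≤ 1 := by
    intro w hw
    obtain ⟨c, hc⟩ : ∃ c : ℂ, c ^ s = w := IsAlgClosed.exists_pow_nat_eq w (by omega)
    have hcρ : ‖c‖ < ρ := by
      by_contra hcon
      push_neg at hcon
      have h1 : ρ ^ s ≤ ‖c‖ ^ s := pow_le_pow_left₀ hρ.le hcon s
      rw [← hc, norm_pow] at hw
      linarith
    have hk : ∀ k : ℕ, HasSum (fun m => b m * (ω ^ k * c) ^ m) (g (ω ^ k * c)) := by
      intro k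
      apply hsum
      rw [norm_mul, hωabs k, one_mul]
      exact hcρ
    have hsumk : HasSum (fun m => ∑ k ∈ range s, b m * (ω ^ k * c) ^ m)
        (∑ k ∈ range s, g (ω ^ k * c)) := hasSum_sum (fun k _ => hk k)
    have heq : (fun m => ∑ k ∈ range s, b m * (ω ^ k * c) ^ m)
        = fun m => (if s ∣ m then (s : ℂ) else 0) * (b m * c ^ m) := by
      funext m
      have h1 : ∀ k : ℕ, b m * (ω ^ k * c) ^ m = (ω ^ m) ^ k * (b m * c ^ m) := by
        intro k
        rw [mul_pow, ← pow_mul, ← pow_mul, mul_comm k m]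
        ring
      rw [Finset.sum_congr rfl (fun k _ => h1 k), ← Finset.sum_mul, omega_sum s hs m]
    rw [heq] at hsumk
    have hinj : Function.Injective (fun j : ℕ => j * s) := fun j1 j2 h => by
      have : j1 * s = j2 * s := h
      exact Nat.eq_of_mul_eq_mul_right (by omega) this
    have hsupp : ∀ m : ℕ, m ∉ Set.range (fun j : ℕ => j * s) →
        (if s ∣ m then (s : ℂ) else 0) * (b m * c ^ m) = 0 := by
      intro m hm
      rw [if_neg, zero_mul]
      intro ⟨j, hj⟩
      exact hm ⟨j, by simpa [mul_comm] using hj.symm⟩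
    have h3 : HasSum ((fun m => (if s ∣ m then (s : ℂ) else 0) * (b m * c ^ m))
        ∘ (fun j : ℕ => j * s)) (∑ k ∈ range s, g (ω ^ k * c)) :=
      (Function.Injective.hasSum_iff hinj hsupp).2 hsumk
    have hs0 : (s : ℂ) ≠ 0 := Nat.cast_ne_zero.2 (by omega)
    refine ⟨(s : ℂ)⁻¹ * ∑ k ∈ range s, g (ω ^ k * c), ?_, ?_⟩
    · have heq2 : ((fun m => (if s ∣ m then (s : ℂ) else 0) * (b m * c ^ m))
          ∘ (fun j : ℕ => j * s)) = fun j : ℕ => (s : ℂ) * (b (j * s) * w ^ j) := by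
        funext j
        simp only [Function.comp]
        rw [if_pos ⟨j, mul_comm j s⟩, ← hc, pow_mul']
      rw [heq2] at h3
      have h5 := h3.mul_left (s : ℂ)⁻¹
      have heq3 : (fun j : ℕ => (s:ℂ)⁻¹ * ((s : ℂ) * (b (j * s) * w ^ j)))
          = fun j : ℕ => b (j * s) * w ^ j := by
        funext j; field_simp
      rw [heq3] at h5
      exact h5
    · rw [norm_mul, norm_inv, Complex.norm_natCast]
      have h6 : ‖∑ k ∈ range s, g (ω ^ k * c)‖ ≤ (s : ℝ) := by
        calc ‖∑ k ∈ range s, g (ω ^ k * c)‖ ≤ ∑ k ∈ range s, ‖g (ω ^ k * c)‖ :=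
              norm_sum_le _ _
        _ ≤ ∑ k ∈ range s, 1 := by
              refine Finset.sum_le_sum (fun k _ => ?_)
              refine hbd _ ?_
              rw [norm_mul, hωabs k, one_mul]; exact hcρ
        _ = s := by simp
      calc (s : ℝ)⁻¹ * ‖∑ k ∈ range s, g (ω ^ k * c)‖ ≤ (s:ℝ)⁻¹ * s := by
            refine mul_le_mul_of_nonneg_left h6 (by positivity)
      _ = 1 := by field_simp
  set G : ℂ → ℂ := fun w => ∑' j : ℕ, b (j * s) * w ^ j with hG
  have h7 : ∀ w : ℂ, ‖w‖ < ρ ^ s → HasSum (fun j => b (j * s) * w ^ j) (G w) := by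
    intro w hw
    obtain ⟨V, hV, _⟩ := main w hw
    rw [hG]; simpa [hV.tsum_eq] using hV
  have h8 : ∀ w : ℂ, ‖w‖ < ρ ^ s → ‖G w‖ ≤ 1 := by
    intro w hw
    obtain ⟨V, hV, hVle⟩ := main w hw
    rw [hG]; simpa [hV.tsum_eq] using hVle
  have := coeff_one_bound (fun j => b (j * s)) (ρ ^ s) (pow_pos hρ s) G h7 h8
  simpa using this



lemma S1' (x : ℝ) (h0 : 0 < x) (h1 : x < 1) :
    HasSum (fun n : ℕ => x ^ n / (n + 1)) (-Real.log (1 - x) / x) := by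
  have S1 := Real.hasSum_pow_div_log_of_abs_lt_one (x := x) (by rw [abs_of_pos h0]; exact h1)
  have h := S1.mul_left (1 / x)
  have heq : (fun n : ℕ => (1 / x) * (x ^ (n + 1) / (n + 1)))
      = fun n : ℕ => x ^ n / (n + 1) := by
    funext m
    rw [pow_succ]
    field_simp
  rw [heq] at h
  rw [show -Real.log (1 - x) / x = 1 / x * -Real.log (1 - x) by ring]
  exact h

lemma S2' (x : ℝ) (h0 : 0 < x) (h1 : x < 1) :
    HasSum (fun n : ℕ => x ^ (n + 1) / (n + 2)) (-Real.log (1 - x) / x - 1) := by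
  have base := S1' x h0 h1
  have h : HasSum (fun n : ℕ => x ^ (n + 1) / ((n + 1 : ℕ) + 1))
      (-Real.log (1 - x) / x - 1) := by
    refine (hasSum_nat_add_iff (f := fun n : ℕ => x ^ n / (n + 1)) 1).2 ?_
    have hv : -Real.log (1 - x) / x - 1 + ∑ i ∈ range 1, x ^ i / ((i : ℝ) + 1)
        = -Real.log (1 - x) / x := by simp
    rw [hv]
    exact base
  have heq : (fun n : ℕ => x ^ (n + 1) / ((n + 1 : ℕ) + 1))
      = fun n : ℕ => x ^ (n + 1) / (n + 2) := by
    funext m; push_cast; ring_nf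
  rw [heq] at h
  exact h

lemma STb (x : ℝ) (h0 : 0 < x) (h1 : x < 1) :
    HasSum (fun n : ℕ => x ^ (n + 1) / ((n + 1) * (n + 2)))
      ((-Real.log (1 - x)) - ((-Real.log (1 - x)) / x - 1)) := by
  have hx1 := Real.hasSum_pow_div_log_of_abs_lt_one (x := x) (by rw [abs_of_pos h0]; exact h1)
  have h := hx1.sub (S2' x h0 h1)
  have heq : (fun n : ℕ => x ^ (n + 1) / (n + 1) - x ^ (n + 1) / (n + 2))
      = fun n : ℕ => x ^ (n + 1) / ((n + 1) * (n + 2)) := by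
    funext m
    have hm1 : ((m : ℝ) + 1) ≠ 0 := by positivity
    have hm2 : ((m : ℝ) + 2) ≠ 0 := by positivity
    field_simp
    ring
  rw [heq] at h
  exact h

-- key root inequality
lemma key_ineq (R : ℝ) (hR : R ∈ Set.Ioo (0 : ℝ) 1)
    (hroot : 3 * (1 - R) * Real.log (1 / (1 - R)) = 2 * R)
    (r : ℝ) (hr0 : 0 < r) (hrR : r ≤ R) :
    2 * r ≤ 3 * (1 - r) * (-Real.log (1 - r)) := by
  obtain ⟨hR0, hR1⟩ := hR
  have hr1 : r < 1 := lt_of_le_of_lt hrR hR1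
  have hTr := STb r hr0 hr1
  have hTR := STb R hR0 hR1
  have hcomp : ((-Real.log (1 - r)) - ((-Real.log (1 - r)) / r - 1))
      ≤ ((-Real.log (1 - R)) - ((-Real.log (1 - R)) / R - 1)) := by
    refine hTr.tsum_eq ▸ hTR.tsum_eq ▸ hTr.summable.tsum_le_tsum ?_ hTR.summable
    intro m
    have hp : r ^ (m + 1) ≤ R ^ (m + 1) := pow_le_pow_left₀ hr0.le hrR (m + 1)
    gcongr
  have hlogR : Real.log (1 / (1 - R)) = -Real.log (1 - R) := by
    rw [one_div, Real.log_inv]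
  rw [hlogR] at hroot
  set Mr := -Real.log (1 - r) with hMrdef
  set MR := -Real.log (1 - R) with hMRdef
  have hRne : R ≠ 0 := hR0.ne'
  have h1 : Mr - (Mr / r - 1) = 1 - Mr * (1 - r) / r := by field_simp; ring
  have h2 : MR - (MR / R - 1) = 1 - MR * (1 - R) / R := by field_simp; ring
  rw [h1, h2] at hcomp
  have h3 : MR * (1 - R) / R = 2 / 3 := by
    rw [div_eq_iff hRne]
    nlinarith [hroot]
  rw [h3] at hcomp
  have h4 : 2 / 3 ≤ Mr * (1 - r) / r := by linarith
  have h5 := (le_div_iff₀ hr0).1 h4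
  nlinarith [h5]

theorem stmt_15 {X : Type*} [NormedAddCommGroup X] [NormedSpace ℂ X] [CompleteSpace X]
    (n : ℕ) (F : X → (Fin n → ℂ)) (a : Fin n → ℂ) (P : ℕ → X → (Fin n → ℂ))
    (hF : DifferentiableOn ℂ F (ball (0 : X) 1))
    (hexp : ∀ z ∈ ball (0 : X) 1, HasSum (fun s : ℕ => P (s + 1) z) (F z - a))
    (hhom : ∀ s : ℕ, 1 ≤ s → ∀ (c : ℂ) (z : X), P s (c • z) = c ^ s • P s z)
    (hbd : ∀ z ∈ ball (0 : X) 1, ‖F z‖ ≤ 1)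
    (ha : ∀ j : Fin n, ‖a j‖ = ‖a‖)
    (R : ℝ) (hR : R ∈ Set.Ioo (0 : ℝ) 1)
    (hroot : 3 * (1 - R) * Real.log (1 / (1 - R)) = 2 * R) :
    ∀ (z : X) (r : ℝ), ‖z‖ = r → 0 < r → r ≤ R →
      (∑' m : ℕ, ‖a‖ * r ^ m / (m + 1))
        + ∑' m : ℕ, (1 / (m + 2 : ℝ)) * ∑ k ∈ range (m + 1), r ^ k * ‖P (m + 1 - k) z‖
      ≤ (1 / r) * Real.log (1 / (1 - r)) := by
  intro z r hz hr0 hrR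
  have hR0 := hR.1
  have hR1 := hR.2
  have hr1 : r < 1 := lt_of_le_of_lt hrR hR1
  -- a = F 0
  have h0mem : (0 : X) ∈ ball (0 : X) 1 := by simp
  have haF0 : a = F 0 := by
    have h1 := hexp 0 h0mem
    have h2 : (fun s : ℕ => P (s + 1) (0 : X)) = fun _ => (0 : Fin n → ℂ) := by
      funext s
      have h3 : P (s + 1) ((0 : ℂ) • (0 : X)) = (0 : ℂ) ^ (s + 1) • P (s + 1) (0 : X) :=
        hhom (s + 1) (by omega) 0 0
      rw [smul_zero] at h3
      rw [h3, zero_pow (by omega), zero_smul]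
    rw [h2] at h1
    have h4 : F 0 - a = 0 := h1.unique hasSum_zero
    rw [sub_eq_zero] at h4
    exact h4.symm
  have hanorm : ‖a‖ ≤ 1 := haF0 ▸ hbd 0 h0mem
  set A := ‖a‖ with hA
  have hA0 : 0 ≤ A := norm_nonneg a
  -- coefficient bound
  have hPz : ∀ s : ℕ, 1 ≤ s → ‖P s z‖ ≤ (1 - A ^ 2) * r ^ s := by
    intro s hs
    have hCr : 0 ≤ (1 - A ^ 2) * r ^ s := by
      have h : (0:ℝ) ≤ 1 - A ^ 2 := by nlinarith
      exact mul_nonneg h (by positivity)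
    rw [pi_norm_le_iff_of_nonneg hCr]
    intro j
    set b : ℕ → ℂ := fun m => if m = 0 then a j else P m z j with hb
    set g : ℂ → ℂ := fun c => F (c • z) j with hg
    have hsumg : ∀ c : ℂ, ‖c‖ < 1 / r → HasSum (fun m => b m * c ^ m) (g c) := by
      intro c hc
      have hmem : c • z ∈ ball (0 : X) 1 := by
        rw [mem_ball_zero_iff, norm_smul, hz]
        calc ‖c‖ * r < (1 / r) * r := by
              exact mul_lt_mul_of_pos_right hc hr0
        _ = 1 := by field_simp
      have h1 := hexp (c • z) hmem
      have h2 : HasSum (fun m : ℕ => (P (m + 1) (c • z)) j) ((F (c • z) - a) j) :=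
        Pi.hasSum.1 h1 j
      have h3 : (fun m : ℕ => (P (m + 1) (c • z)) j)
          = fun m : ℕ => b (m + 1) * c ^ (m + 1) := by
        funext m
        rw [hhom (m + 1) (by omega) c z]
        simp [hb, mul_comm]
      rw [h3] at h2
      have h4 := (hasSum_nat_add_iff (f := fun m : ℕ => b m * c ^ m) 1).1 (by exact h2)
      have h5 : (F (c • z) - a) j + ∑ i ∈ range 1, b i * c ^ i = g c := by
        simp [hb, hg, Pi.sub_apply]
      rw [h5] at h4
      exact h4
    have hbdg : ∀ c : ℂ, ‖c‖ < 1 / r → ‖g c‖ ≤ 1 := by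
      intro c hc
      have hmem : c • z ∈ ball (0 : X) 1 := by
        rw [mem_ball_zero_iff, norm_smul, hz]
        calc ‖c‖ * r < (1 / r) * r := mul_lt_mul_of_pos_right hc hr0
        _ = 1 := by field_simp
      exact (norm_le_pi_norm (F (c • z)) j).trans (hbd _ hmem)
    have hcb := coeff_bound b (1 / r) (by positivity) g hsumg hbdg s hs
    have hb0 : b 0 = a j := by simp [hb]
    have hbs : b s = P s z j := by
      simp only [hb]
      rw [if_neg (by omega : ¬ s = 0)]
    rw [hb0, hbs, ha j] at hcb
    have hrs : (0:ℝ) < r ^ s := by positivity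
    rw [div_pow, one_pow, mul_one_div, div_le_iff₀ hrs] at hcb
    exact hcb
  -- series part
  have h1r : (0:ℝ) < 1 - r := by linarith
  have hS1 : HasSum (fun m : ℕ => A * r ^ m / (m + 1)) (A * (-Real.log (1 - r) / r)) := by
    have h := (S1' r hr0 hr1).mul_left A
    have heq : (fun m : ℕ => A * (r ^ m / (m + 1))) = fun m : ℕ => A * r ^ m / (m + 1) := by
      funext m; ring
    rw [heq] at h
    exact h
  have hgeom : HasSum (fun m : ℕ => r ^ (m + 1)) (r / (1 - r)) := by
    have h := (hasSum_geometric_of_lt_one hr0.le hr1).mul_left r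
    have heq : (fun m : ℕ => r * r ^ m) = fun m : ℕ => r ^ (m + 1) := by
      funext m; rw [pow_succ]; ring
    rw [heq] at h
    rw [div_eq_mul_inv]
    exact h
  have hmaj : HasSum (fun m : ℕ => (1 - A ^ 2) * (r ^ (m + 1) - r ^ (m + 1) / (m + 2)))
      ((1 - A ^ 2) * (r / (1 - r) - (-Real.log (1 - r) / r - 1))) :=
    (hgeom.sub (S2' r hr0 hr1)).mul_left _
  have key := key_ineq R hR hroot r hr0 hrR
  have hM2 : (-Real.log (1 - r)) * (1 - r) ≤ r := by
    have h := Real.log_le_sub_one_of_pos (x := 1/(1-r)) (by positivity)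
    rw [one_div, Real.log_inv] at h
    calc (-Real.log (1 - r)) * (1 - r) ≤ ((1-r)⁻¹ - 1) * (1 - r) :=
          mul_le_mul_of_nonneg_right h h1r.le
    _ = r := by field_simp; ring
  -- termwise bound for second series
  have hTle : ∀ m : ℕ, (1 / (m + 2 : ℝ)) * ∑ k ∈ range (m + 1), r ^ k * ‖P (m + 1 - k) z‖
      ≤ (1 - A ^ 2) * (r ^ (m + 1) - r ^ (m + 1) / (m + 2)) := by
    intro m
    have hsum1 : ∑ k ∈ range (m + 1), r ^ k * ‖P (m + 1 - k) z‖
        ≤ (m + 1 : ℝ) * ((1 - A ^ 2) * r ^ (m + 1)) := by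
      calc ∑ k ∈ range (m + 1), r ^ k * ‖P (m + 1 - k) z‖
          ≤ ∑ _k ∈ range (m + 1), (1 - A ^ 2) * r ^ (m + 1) := by
            refine Finset.sum_le_sum (fun k hk => ?_)
            have hkm : k ≤ m := by
              have := Finset.mem_range.1 hk; omega
            have hps := hPz (m + 1 - k) (by omega)
            calc r ^ k * ‖P (m + 1 - k) z‖
                ≤ r ^ k * ((1 - A ^ 2) * r ^ (m + 1 - k)) := by
                  exact mul_le_mul_of_nonneg_left hps (by positivity)
            _ = (1 - A ^ 2) * (r ^ k * r ^ (m + 1 - k)) := by ring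
            _ = (1 - A ^ 2) * r ^ (m + 1) := by
                  rw [← pow_add]
                  congr 2
                  omega
      _ = (m + 1 : ℝ) * ((1 - A ^ 2) * r ^ (m + 1)) := by
            rw [Finset.sum_const, Finset.card_range]
            push_cast
            ring
    have hm2 : (0:ℝ) < (m : ℝ) + 2 := by positivity
    calc (1 / (m + 2 : ℝ)) * ∑ k ∈ range (m + 1), r ^ k * ‖P (m + 1 - k) z‖
        ≤ (1 / (m + 2 : ℝ)) * ((m + 1 : ℝ) * ((1 - A ^ 2) * r ^ (m + 1))) := by
          exact mul_le_mul_of_nonneg_left hsum1 (by positivity)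
    _ = (1 - A ^ 2) * (r ^ (m + 1) - r ^ (m + 1) / (m + 2)) := by
          field_simp
          ring
  have hTnn : ∀ m : ℕ, 0 ≤ (1 / (m + 2 : ℝ)) * ∑ k ∈ range (m + 1), r ^ k * ‖P (m + 1 - k) z‖ := by
    intro m
    refine mul_nonneg (by positivity) (Finset.sum_nonneg (fun k _ => ?_))
    exact mul_nonneg (by positivity) (norm_nonneg _)
  have hsummT : Summable (fun m : ℕ => (1 / (m + 2 : ℝ)) *
      ∑ k ∈ range (m + 1), r ^ k * ‖P (m + 1 - k) z‖) :=
    Summable.of_nonneg_of_le hTnn hTle hmaj.summable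
  have htsumT : (∑' m : ℕ, (1 / (m + 2 : ℝ)) * ∑ k ∈ range (m + 1), r ^ k * ‖P (m + 1 - k) z‖)
      ≤ (1 - A ^ 2) * (r / (1 - r) - (-Real.log (1 - r) / r - 1)) := by
    rw [← hmaj.tsum_eq]
    exact hsummT.tsum_le_tsum hTle hmaj.summable
  rw [hS1.tsum_eq]
  rw [show Real.log (1/(1-r)) = -Real.log (1 - r) by rw [one_div, Real.log_inv]]
  have hfin : A * (-Real.log (1 - r) / r)
      + (1 - A ^ 2) * (r / (1 - r) - (-Real.log (1 - r) / r - 1))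
      ≤ 1 / r * (-Real.log (1 - r)) := by
    set M := -Real.log (1 - r) with hMdef
    have hpoly : A * M * (1 - r) + (1 - A ^ 2) * (r - M * (1 - r)) ≤ M * (1 - r) := by
      nlinarith [mul_nonneg (mul_nonneg (sub_nonneg.2 hanorm) (by linarith : (0:ℝ) ≤ 2 + A))
          (by nlinarith [key] : (0:ℝ) ≤ 3 * ((1 - r) * M) - 2 * r),
        mul_nonneg hr0.le (mul_nonneg (sub_nonneg.2 hanorm) (sub_nonneg.2 hanorm))]
    have hD : (0:ℝ) < r * (1 - r) := mul_pos hr0 h1r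
    have lhs_eq : A * (M / r) + (1 - A ^ 2) * (r / (1 - r) - (M / r - 1))
        = (A * M * (1 - r) + (1 - A ^ 2) * (r - M * (1 - r))) / (r * (1 - r)) := by
      field_simp
      ring
    have rhs_eq : 1 / r * M = (M * (1 - r)) / (r * (1 - r)) := by
      field_simp
    rw [lhs_eq, rhs_eq]
    gcongr
  linarith [htsumT, hfin]
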